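/- Let α ∈ R and n ≥ 1, and let A, B ∈ 𝒥(R) satisfy A ≡ t + α t^{n+1} (mod 𝒥_{n+1}(R)) and B ≡ t + α t^{n+2} (mod 𝒥_{n+2}(R)). Then for every β ∈ R and every m ≥ n+2 there exist a, c ∈ 𝒥_{m−n}(R) and b, d ∈ 𝒥_{m−n−1}(R) such that [a,A] ∘ [b,B] ≡ t + αβ t^{m+1} (mod 𝒥_{m+1}(R)) and [c,A] ∘ [d,B] ≡ t + βα t^{m+1} (mod 𝒥_{m+1}(R)). -/

import Mathlib

open PowerSeries

/-- The set `𝒥(R)` of formal power series `t + ∑_{i≥1} α_i t^{i+1}`. -/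
def Jset (R : Type*) [Ring R] : Set (PowerSeries R) :=
  {f | coeff 0 f = 0 ∧ coeff 1 f = 1}

/-- The substitution product `f ∘ g = ∑_{m ≥ 0} α_m g^{m+1}`, defined coefficientwise. -/
noncomputable def Jcomp {R : Type*} [Ring R] (f g : PowerSeries R) : PowerSeries R :=
  PowerSeries.mk fun k => ∑ m ∈ Finset.range k, coeff (m + 1) f * coeff k (g ^ (m + 1))

/-- `𝒥_n(R)`. -/
def JsetN (R : Type*) [Ring R] (n : ℕ) : Set (PowerSeries R) :=
  {f | f ∈ Jset R ∧ ∀ i, 1 ≤ i → i < n → coeff (i + 1) f = 0}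

/-- `f ≡ g (mod 𝒥_n(R))`. -/
def JModEq {R : Type*} [Ring R] (n : ℕ) (f g : PowerSeries R) : Prop :=
  ∀ i, 1 ≤ i → i < n → coeff (i + 1) f = coeff (i + 1) g

section Auxiliary

open Finset

variable {R : Type*} [Ring R]

lemma pow_coeff_zero (h : PowerSeries R) (s : ℕ) (hh : ∀ j, j ≤ s → coeff j h = 0) :
    ∀ j k, k < j * (s + 1) → coeff k (h ^ j) = 0 := by
  intro j
  induction j with
  | zero => intro k hk; omega
  | succ j ih =>
    intro k hk
    rw [pow_succ, coeff_mul]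
    apply Finset.sum_eq_zero
    rintro ⟨x, y⟩ hxy
    replace hxy : x + y = k := by simpa using hxy
    by_cases hy : y ≤ s
    · rw [hh y hy, mul_zero]
    · rw [add_one_mul] at hk
      rw [ih x (by omega), zero_mul]

lemma coeff_add_pow (h : PowerSeries R) (s : ℕ) (hh : ∀ j, j ≤ s → coeff j h = 0)
    (i N : ℕ) (hN : N < i + 2 * s) :
    coeff (N + 1) ((X + h) ^ (i + 1)) =
      (if i = N then 1 else 0) + (i + 1) • coeff (N + 1 - i) h := by
  rw [show (X + h : PowerSeries R) = h + X from add_comm _ _, (commute_X h).add_pow, map_sum]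
  rw [Finset.sum_congr rfl (g := fun jj =>
      (if jj = 0 then (if i = N then (1:R) else 0) else 0) +
      (if jj = 1 then (i + 1) • coeff (N + 1 - i) h else 0))
    (fun jj hjj => ?_)]
  · rw [Finset.sum_add_distrib, Finset.sum_ite_eq' (Finset.range (i + 2)),
      Finset.sum_ite_eq' (Finset.range (i + 2))]
    simp
  · rw [mem_range] at hjj
    rw [show ((i + 1).choose jj : PowerSeries R) = C ((i+1).choose jj : R) from rfl,
      coeff_mul_C, coeff_mul_X_pow']
    beta_reduce
    by_cases h0 : jj = 0
    · subst h0
      simp only [pow_zero, coeff_one, Nat.choose_zero_right, Nat.cast_one, mul_one,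
        if_pos rfl, if_neg (one_ne_zero (α := ℕ)).symm, add_zero]
      split_ifs <;> first | rfl | omega
    by_cases h1 : jj = 1
    · subst h1
      simp only [pow_one, Nat.choose_one_right, Nat.add_sub_cancel,
        if_neg (one_ne_zero (α := ℕ)), eq_self_iff_true, if_true, zero_add]
      rcases le_or_gt i (N + 1) with hc | hc
      · rw [if_pos hc, nsmul_eq_mul, (Nat.cast_commute (i+1) (coeff (N+1-i) h)).eq]
      · rw [if_neg (not_le.mpr hc), show N + 1 - i = 0 by omega, hh 0 (Nat.zero_le s),
          smul_zero, zero_mul]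
    · have hjj2 : 2 ≤ jj := by omega
      rw [if_neg h0, if_neg h1, add_zero]
      rcases le_or_gt (i + 1 - jj) (N + 1) with hc | hc
      · have hb : N + 1 - (i + 1 - jj) < jj * (s + 1) := by
          have h4 : 2 * s ≤ jj * s := Nat.mul_le_mul_right s hjj2
          have h5 : jj * (s + 1) = jj * s + jj := by ring
          omega
        rw [if_pos hc, pow_coeff_zero h s hh _ _ hb, zero_mul]
      · rw [if_neg (not_le.mpr hc), zero_mul]

lemma coeff_Jcomp (f g : PowerSeries R) (k : ℕ) :
    coeff k (Jcomp f g) = ∑ i ∈ Finset.range k, coeff (i + 1) f * coeff k (g ^ (i + 1)) := by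
  rw [Jcomp, coeff_mk]

lemma coeff_Jcomp_core (s r : ℕ) (hs : 1 ≤ s) (hr : 1 ≤ r) (p q : PowerSeries R)
    (hp : ∀ j, j ≤ s → coeff j p = 0) (hq : ∀ j, j ≤ r → coeff j q = 0)
    (N : ℕ) (hN1 : 1 ≤ N) (hN : N ≤ s + r) :
    coeff (N + 1) (Jcomp (X + p) (X + q)) =
      coeff (N + 1) p + coeff (N + 1) q +
      (if N = s + r then (s + 1) • (coeff (s + 1) p * coeff (r + 1) q) else 0) := by
  rw [coeff_Jcomp]
  rw [Finset.sum_congr rfl (g := fun i =>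
      (if i = 0 then coeff (N + 1) q else 0) +
      (if i = N then coeff (N + 1) p else 0) +
      (if i = s then (if N = s + r then (s + 1) • (coeff (s + 1) p * coeff (r + 1) q) else 0)
        else 0))
    (fun i hi => ?_)]
  · rw [Finset.sum_add_distrib, Finset.sum_add_distrib,
      Finset.sum_ite_eq' (Finset.range (N + 1)), Finset.sum_ite_eq' (Finset.range (N + 1)),
      Finset.sum_ite_eq' (Finset.range (N + 1))]
    simp only [Finset.mem_range]
    rw [if_pos (show 0 < N + 1 by omega), if_pos (show N < N + 1 by omega)]
    rcases eq_or_ne N (s + r) with hNe | hNe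
    · rw [if_pos (show s < N + 1 by omega), if_pos hNe]; abel
    · rw [if_neg hNe]
      split_ifs <;> abel
  · rw [Finset.mem_range] at hi
    beta_reduce
    rcases Nat.eq_zero_or_pos i with rfl | hi1
    · have e1 : coeff (0 + 1) (X + p : PowerSeries R) = 1 := by
        rw [map_add, coeff_one_X, hp 1 hs, add_zero]
      have e2 : coeff (N + 1) ((X + q : PowerSeries R) ^ (0 + 1)) = coeff (N + 1) q := by
        rw [pow_one, map_add, coeff_X, if_neg (by omega : ¬ (N + 1 = 1)), zero_add]
      rw [e1, e2, one_mul, if_pos rfl, if_neg (by omega : ¬ (0 = N)),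
        if_neg (by omega : ¬ (0 = s)), add_zero, add_zero]
    · have hX : coeff (i + 1) (X + p : PowerSeries R) = coeff (i + 1) p := by
        rw [map_add, coeff_X, if_neg (by omega : ¬ (i + 1 = 1)), zero_add]
      rw [hX, if_neg (by omega : ¬ (i = 0)), zero_add]
      rcases lt_or_ge i s with his | his
      · rw [hp (i + 1) (by omega), zero_mul]
        rw [if_neg (by omega : ¬ (i = s)), add_zero]
        rcases eq_or_ne i N with rfl | hiN
        · rw [if_pos rfl, hp (i + 1) (by omega)]
        · rw [if_neg hiN]
      · rw [coeff_add_pow q r hq i N (by omega)]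
        rw [mul_add, mul_smul_comm]
        rcases le_or_gt (N + 1 - i) r with hsmall | hbig
        · rw [hq _ hsmall, mul_zero, smul_zero, add_zero]
          have hns : ¬ (i = s) ∨ ¬ (N = s + r) := by
            rcases eq_or_ne i s with rfl | h'
            · right; omega
            · left; exact h'
          rcases eq_or_ne i N with rfl | hiN
          · rw [if_pos rfl, if_pos rfl, mul_one]
            rcases hns with h' | h'
            · rw [if_neg h', add_zero]
            · rw [if_neg h', ite_self, add_zero]
          · rw [if_neg hiN, if_neg hiN, mul_zero, zero_add]
            rcases hns with h' | h'
            · rw [if_neg h']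
            · rw [if_neg h', ite_self]
        · have h1 : i = s ∧ N = s + r ∧ N + 1 - i = r + 1 := by omega
          obtain ⟨rfl, hNsr, hsub⟩ := h1
          rw [hsub, if_neg (by omega : ¬ (i = N)), if_neg (by omega : ¬ (i = N)),
            mul_zero, zero_add, if_pos rfl, if_pos hNsr, zero_add]

lemma Jcomp_coeff_one (f g : PowerSeries R) :
    coeff 1 (Jcomp f g) = coeff 1 f * coeff 1 g := by
  rw [coeff_Jcomp]
  simp [pow_one]

lemma div_step (w z u : PowerSeries R) (hw1 : coeff 1 w = 1)
    (hu0 : coeff 0 u = 0) (hu1 : coeff 1 u = 1) (h : Jcomp w u = z)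
    (N : ℕ) (hN : 1 ≤ N) (hind : ∀ j, 1 ≤ j → j < N → coeff (j + 1) u = 0) :
    coeff (N + 1) u = coeff (N + 1) z - coeff (N + 1) w := by
  have hz := congrArg (coeff (N + 1)) h
  rw [coeff_Jcomp] at hz
  have hcoef : ∀ j, j ≤ N → coeff j (u - X) = 0 := by
    intro j hj
    rw [map_sub, coeff_X]
    rcases j with _ | _ | j
    · rw [if_neg (by omega : ¬ (0 = 1)), sub_zero, hu0]
    · rw [if_pos rfl, hu1, sub_self]
    · rw [if_neg (by omega : ¬ (j + 1 + 1 = 1)), sub_zero]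
      exact hind (j + 1) (by omega) (by omega)
  rw [Finset.sum_congr rfl (g := fun i =>
      (if i = 0 then coeff (N + 1) u else 0) + (if i = N then coeff (N + 1) w else 0))
    (fun i hi => ?_)] at hz
  · rw [Finset.sum_add_distrib, Finset.sum_ite_eq' (Finset.range (N + 1)),
      Finset.sum_ite_eq' (Finset.range (N + 1)), if_pos (Finset.mem_range.mpr (by omega)),
      if_pos (Finset.mem_range.mpr (by omega))] at hz
    rw [← hz]; abel
  · rw [Finset.mem_range] at hi
    beta_reduce
    rcases Nat.eq_zero_or_pos i with rfl | hi1
    · rw [pow_one, hw1, one_mul, if_pos rfl, if_neg (by omega : ¬ (0 = N)), add_zero]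
    · have hpow := coeff_add_pow (u - X) N hcoef i N (by omega)
      rw [show (X + (u - X) : PowerSeries R) = u from by abel] at hpow
      rw [hpow, hcoef (N + 1 - i) (by omega), smul_zero, add_zero, mul_ite, mul_one, mul_zero,
        if_neg (by omega : ¬ (i = 0)), zero_add]
      split_ifs with hiq
      · rw [hiq]
      · rfl

lemma div_vanish (w z u : PowerSeries R) (hw1 : coeff 1 w = 1)
    (hu0 : coeff 0 u = 0) (hu1 : coeff 1 u = 1) (h : Jcomp w u = z) (M : ℕ)
    (hagree : ∀ j, 1 ≤ j → j < M → coeff (j + 1) w = coeff (j + 1) z) :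
    ∀ j, 1 ≤ j → j < M → coeff (j + 1) u = 0 := by
  intro j
  induction j using Nat.strong_induction_on with
  | _ j ih =>
    intro h1 h2
    rw [div_step w z u hw1 hu0 hu1 h j h1 (fun j' a b => ih j' b a (by omega)),
      ← hagree j h1 h2, sub_self]

/-- Coefficients of the "commutator" u defined by `Jcomp (Jcomp A a) u = Jcomp a A`. -/
lemma commutator_coeffs (n k : ℕ) (hn : 1 ≤ n) (hk : 1 ≤ k) (A : PowerSeries R) (γ : R)
    (hAq : ∀ j, j ≤ n → coeff j (A - X) = 0) (hAn : coeff (n + 1) (A - X) = γ → True)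
    (a : PowerSeries R) (ha : a = X + monomial (k + 1) (γ))
    (u : PowerSeries R) (hu0 : coeff 0 u = 0) (hu1 : coeff 1 u = 1)
    (h : Jcomp (Jcomp A a) u = Jcomp a A) :
    (∀ j, 1 ≤ j → j < n + k → coeff (j + 1) u = 0) ∧
      coeff (n + k + 1) u =
        (k + 1) • (γ * coeff (n + 1) (A - X)) - (n + 1) • (coeff (n + 1) (A - X) * γ) := by
  have hpa : ∀ j, j ≤ k → coeff j (a - X) = 0 := by
    intro j hj
    rw [ha]
    simp only [add_sub_cancel_left, coeff_monomial]
    rw [if_neg (by omega)]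
  have hpk : coeff (k + 1) (a - X) = γ := by
    simp [ha, coeff_monomial]
  have hAX : A = X + (A - X) := by abel
  have haX : a = X + (a - X) := by abel
  have hw : ∀ N, 1 ≤ N → N ≤ n + k → coeff (N + 1) (Jcomp A a) =
      coeff (N + 1) (A - X) + coeff (N + 1) (a - X) +
      (if N = n + k then (n + 1) • (coeff (n + 1) (A - X) * coeff (k + 1) (a - X)) else 0) := by
    intro N h1 h2
    conv_lhs => rw [hAX, haX]
    exact coeff_Jcomp_core n k hn hk _ _ hAq hpa N h1 h2
  have hzc : ∀ N, 1 ≤ N → N ≤ n + k → coeff (N + 1) (Jcomp a A) =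
      coeff (N + 1) (a - X) + coeff (N + 1) (A - X) +
      (if N = n + k then (k + 1) • (coeff (k + 1) (a - X) * coeff (n + 1) (A - X)) else 0) := by
    intro N h1 h2
    conv_lhs => rw [hAX, haX]
    have hcore := coeff_Jcomp_core k n hk hn _ _ hpa hAq N h1 (by omega)
    rw [show k + n = n + k from Nat.add_comm k n] at hcore
    exact hcore
  have hagree : ∀ j, 1 ≤ j → j < n + k →
      coeff (j + 1) (Jcomp A a) = coeff (j + 1) (Jcomp a A) := by
    intro j h1 h2
    rw [hw j h1 (by omega), hzc j h1 (by omega), if_neg (by omega), if_neg (by omega)]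
    abel
  have hw1 : coeff 1 (Jcomp A a) = 1 := by
    rw [Jcomp_coeff_one]
    have e1 : coeff 1 A = 1 := by
      have := hAq 1 hn
      rw [map_sub, coeff_one_X] at this
      exact sub_eq_zero.mp this
    have e2 : coeff 1 a = 1 := by
      rw [ha, map_add, coeff_one_X, coeff_monomial, if_neg (by omega), add_zero]
    rw [e1, e2, one_mul]
  have hvan := div_vanish _ _ u hw1 hu0 hu1 h (n + k) hagree
  refine ⟨hvan, ?_⟩
  rw [div_step _ _ u hw1 hu0 hu1 h (n + k) (by omega) hvan,
    hw (n + k) (by omega) le_rfl, hzc (n + k) (by omega) le_rfl, if_pos rfl, if_pos rfl, hpk]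
  abel

lemma comp_coeff (m : ℕ) (hm : 1 ≤ m) (u v : PowerSeries R)
    (hu : ∀ j, j ≤ m → coeff j (u - X) = 0) (hv : ∀ j, j ≤ m → coeff j (v - X) = 0)
    (N : ℕ) (hN1 : 1 ≤ N) (hN : N ≤ m) :
    coeff (N + 1) (Jcomp u v) = coeff (N + 1) (u - X) + coeff (N + 1) (v - X) := by
  conv_lhs => rw [show u = X + (u - X) from by abel, show v = X + (v - X) from by abel]
  rw [coeff_Jcomp_core m m hm hm _ _ hu hv N hN1 (by omega), if_neg (by omega), add_zero]

lemma main_aux {K : Type*} [Field K] [CharZero K] {R : Type*} [Ring R] [Algebra K R]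
    (α β : R) (n k' : ℕ) (hn : 1 ≤ n) (hk : 1 ≤ k')
    (A B : PowerSeries R)
    (hAq : ∀ j, j ≤ n → coeff j (A - X) = 0) (hAn : coeff (n + 1) (A - X) = α)
    (hBq : ∀ j, j ≤ n + 1 → coeff j (B - X) = 0) (hBn : coeff (n + 2) (B - X) = α)
    (e f : K) (target : R)
    (htarget : (((k' + 1 + 1 : ℕ) : K) * e) • (β * α) - (((n + 1 : ℕ) : K) * e) • (α * β)
      + ((((k' + 1 : ℕ) : K) * f) • (β * α) - (((n + 1 + 1 : ℕ) : K) * f) • (α * β)) = target) :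
    ∃ a ∈ JsetN R (k' + 1), ∃ b ∈ JsetN R k',
      ∀ u ∈ Jset R, ∀ v ∈ Jset R,
        Jcomp (Jcomp A a) u = Jcomp a A → Jcomp (Jcomp B b) v = Jcomp b B →
        JModEq (n + k' + 1 + 1) (Jcomp u v) (X + monomial (n + k' + 1 + 1) target) := by
  set γ : R := e • β with hγ
  set δ : R := f • β with hδ
  refine ⟨X + monomial (k' + 1 + 1) γ, ?_, X + monomial (k' + 1) δ, ?_, ?_⟩
  · refine ⟨⟨?_, ?_⟩, ?_⟩
    · rw [map_add, coeff_X, if_neg (by omega), coeff_monomial, if_neg (by omega), add_zero]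
    · rw [map_add, coeff_one_X, coeff_monomial, if_neg (by omega), add_zero]
    · intro i h1 h2
      rw [map_add, coeff_X, if_neg (by omega), coeff_monomial, if_neg (by omega), add_zero]
  · refine ⟨⟨?_, ?_⟩, ?_⟩
    · rw [map_add, coeff_X, if_neg (by omega), coeff_monomial, if_neg (by omega), add_zero]
    · rw [map_add, coeff_one_X, coeff_monomial, if_neg (by omega), add_zero]
    · intro i h1 h2
      rw [map_add, coeff_X, if_neg (by omega), coeff_monomial, if_neg (by omega), add_zero]
  · intro u hu v hv hue hve
    obtain ⟨huv, hutop⟩ := commutator_coeffs n (k' + 1) hn (by omega) A γ hAq (fun _ => trivial)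
      _ rfl u hu.1 hu.2 hue
    obtain ⟨hvv, hvtop⟩ := commutator_coeffs (n + 1) k' (by omega) hk B δ hBq (fun _ => trivial)
      _ rfl v hv.1 hv.2 hve
    rw [show n + 1 + k' = n + k' + 1 from by omega] at hvv hvtop
    rw [show n + (k' + 1) = n + k' + 1 from by omega] at huv hutop
    have hBn' : coeff (n + 1 + 1) (B - X) = α := hBn
    set m := n + k' + 1 with hm
    have hup : ∀ j, j ≤ m → coeff j (u - X) = 0 := by
      intro j hj
      rw [map_sub, coeff_X]
      rcases j with _ | _ | j
      · rw [if_neg (by omega), sub_zero, hu.1]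
      · rw [if_pos rfl, hu.2, sub_self]
      · rw [if_neg (by omega), sub_zero]
        exact huv (j + 1) (by omega) (by omega)
    have hvp : ∀ j, j ≤ m → coeff j (v - X) = 0 := by
      intro j hj
      rw [map_sub, coeff_X]
      rcases j with _ | _ | j
      · rw [if_neg (by omega), sub_zero, hv.1]
      · rw [if_pos rfl, hv.2, sub_self]
      · rw [if_neg (by omega), sub_zero]
        exact hvv (j + 1) (by omega) (by omega)
    intro i h1 h2
    rw [comp_coeff m (by omega) u v hup hvp i h1 (by omega)]
    rw [map_add, coeff_X, if_neg (by omega), coeff_monomial, zero_add]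
    rcases eq_or_ne i m with rfl | him
    · rw [if_pos rfl]
      have e1 : coeff (m + 1) (u - X) = coeff (m + 1) u := by
        rw [map_sub, coeff_X, if_neg (by omega), sub_zero]
      have e2 : coeff (m + 1) (v - X) = coeff (m + 1) v := by
        rw [map_sub, coeff_X, if_neg (by omega), sub_zero]
      rw [e1, e2, hutop, hvtop, hAn, hBn']
      rw [← htarget, hγ, hδ]
      simp only [smul_mul_assoc, mul_smul_comm]
      rw [← Nat.cast_smul_eq_nsmul K (k' + 1 + 1), ← Nat.cast_smul_eq_nsmul K (n + 1),
        ← Nat.cast_smul_eq_nsmul K (k' + 1), ← Nat.cast_smul_eq_nsmul K (n + 1 + 1)]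
      simp only [smul_smul]
    · rw [if_neg (fun hcon => him (by omega)), hup (i + 1) (by omega), hvp (i + 1) (by omega),
        add_zero]


end Auxiliary

/-- Klopsch's lemma: given `A ≡ t + α t^{n+1} (mod 𝒥_{n+1})` and
`B ≡ t + α t^{n+2} (mod 𝒥_{n+2})` and `m ≥ n+2`, there are `a, c ∈ 𝒥_{m−n}` and
`b, d ∈ 𝒥_{m−n−1}` with `[a,A] ∘ [b,B] ≡ t + αβ t^{m+1}` and
`[c,A] ∘ [d,B] ≡ t + βα t^{m+1}` mod `𝒥_{m+1}`.  (The commutator `[a,A]` is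
formalized as: any `u ∈ 𝒥(R)` with `(A ∘ a) ∘ u = a ∘ A`.) -/
theorem statement10 (K : Type*) [Field K] [CharZero K]
    (R : Type*) [Ring R] [Algebra K R]
    (α : R) (n : ℕ) (hn : 1 ≤ n) (A B : PowerSeries R)
    (hA : A ∈ Jset R) (hB : B ∈ Jset R)
    (hAc : JModEq (n + 1) A (X + monomial (n + 1) α))
    (hBc : JModEq (n + 2) B (X + monomial (n + 2) α))
    (β : R) (m : ℕ) (hm : n + 2 ≤ m) :
    (∃ a ∈ JsetN R (m - n), ∃ b ∈ JsetN R (m - n - 1),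
      ∀ u ∈ Jset R, ∀ v ∈ Jset R,
        Jcomp (Jcomp A a) u = Jcomp a A → Jcomp (Jcomp B b) v = Jcomp b B →
        JModEq (m + 1) (Jcomp u v) (X + monomial (m + 1) (α * β))) ∧
    (∃ c ∈ JsetN R (m - n), ∃ d ∈ JsetN R (m - n - 1),
      ∀ u ∈ Jset R, ∀ v ∈ Jset R,
        Jcomp (Jcomp A c) u = Jcomp c A → Jcomp (Jcomp B d) v = Jcomp d B →
        JModEq (m + 1) (Jcomp u v) (X + monomial (m + 1) (β * α))) := by
  have hAq : ∀ j, j ≤ n → coeff j (A - X) = 0 := by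
    intro j hj
    rw [map_sub, coeff_X]
    rcases j with _ | _ | j
    · rw [if_neg (by omega), sub_zero, hA.1]
    · rw [if_pos rfl, hA.2, sub_self]
    · rw [if_neg (by omega), sub_zero, hAc (j + 1) (by omega) (by omega), map_add, coeff_X,
        if_neg (by omega), coeff_monomial, if_neg (by omega), add_zero]
  have hAn : coeff (n + 1) (A - X) = α := by
    rw [map_sub, coeff_X, if_neg (by omega), sub_zero, hAc n hn (by omega), map_add, coeff_X,
      if_neg (by omega), coeff_monomial, if_pos rfl, zero_add]
  have hBq : ∀ j, j ≤ n + 1 → coeff j (B - X) = 0 := by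
    intro j hj
    rw [map_sub, coeff_X]
    rcases j with _ | _ | j
    · rw [if_neg (by omega), sub_zero, hB.1]
    · rw [if_pos rfl, hB.2, sub_self]
    · rw [if_neg (by omega), sub_zero, hBc (j + 1) (by omega) (by omega), map_add, coeff_X,
        if_neg (by omega), coeff_monomial, if_neg (by omega), add_zero]
  have hBn : coeff (n + 2) (B - X) = α := by
    rw [map_sub, coeff_X, if_neg (by omega), sub_zero, hBc (n + 1) (by omega) (by omega), map_add,
      coeff_X, if_neg (by omega), coeff_monomial, if_pos rfl, zero_add]
  obtain ⟨k', hk', hmk⟩ : ∃ k', 1 ≤ k' ∧ m = n + k' + 1 := ⟨m - n - 1, by omega, by omega⟩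
  subst hmk
  rw [show n + k' + 1 - n = k' + 1 from by omega, show k' + 1 - 1 = k' from by omega]
  have hD : ((n + k' + 3 : ℕ) : K) ≠ 0 := Nat.cast_ne_zero.mpr (by omega)
  constructor
  · exact main_aux α β n k' hn hk' A B hAq hAn hBq hBn
      (((k' + 1 : ℕ) : K) / ((n + k' + 3 : ℕ) : K))
      (-(((k' + 2 : ℕ) : K) / ((n + k' + 3 : ℕ) : K))) (α * β)
      (by
        have hD3 : ((n:K) + (k':K) + 3) ≠ 0 := by
          push_cast at hD; intro h; exact hD (by linear_combination h)
        match_scalars <;> field_simp <;> ring)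
  · exact main_aux α β n k' hn hk' A B hAq hAn hBq hBn
      (((n + 2 : ℕ) : K) / ((n + k' + 3 : ℕ) : K))
      (-(((n + 1 : ℕ) : K) / ((n + k' + 3 : ℕ) : K))) (β * α)
      (by
        have hD3 : ((n:K) + (k':K) + 3) ≠ 0 := by
          push_cast at hD; intro h; exact hD (by linear_combination h)
        match_scalars <;> field_simp <;> ring)
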